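/- Let H be a complex Hilbert space, x, y ∈ H, and S, T bounded linear operators on H. Define the covariance cov_{x,y}(S,T) = ‖y‖²·(Sx | Tx) − (Sx | y)(y | Tx) and variances var_{x,y}(S) = cov_{x,y}(S,S), var_{x,y}(T) = cov_{x,y}(T,T). Then the 2×2 complex matrix [[var_{x,y}(S), cov_{x,y}(S,T)], [conj(cov_{x,y}(S,T)), var_{x,y}(T)]] is positive semidefinite; in particular the covariance–variance inequality |cov_{x,y}(S,T)|² ≤ var_{x,y}(S) · var_{x,y}(T) holds. -/

import Mathlib

open scoped InnerProductSpace ComplexConjugate ComplexOrder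

/-- The covariance `cov_{x,y}(S,T) = ‖y‖²⟪Sx,Tx⟫ − ⟪Sx,y⟫⟪y,Tx⟫` of two bounded
operators with respect to vectors `x, y`. -/
noncomputable def covOp {H : Type*} [NormedAddCommGroup H] [InnerProductSpace ℂ H]
    (x y : H) (S T : H →L[ℂ] H) : ℂ :=
  (‖y‖ : ℂ) ^ 2 * ⟪S x, T x⟫_ℂ - ⟪S x, y⟫_ℂ * ⟪y, T x⟫_ℂ

lemma re_inner_self_eq {H : Type*} [NormedAddCommGroup H] [InnerProductSpace ℂ H]
    (a : H) : (⟪a, a⟫_ℂ).re = ‖a‖ ^ 2 := by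
  rw [inner_self_eq_norm_sq_to_K]
  exact Complex.ofReal_pow ‖a‖ 2 ▸ Complex.ofReal_re (‖a‖ ^ 2)

lemma gram2_aux {H : Type*} [NormedAddCommGroup H] [InnerProductSpace ℂ H]
    (a b : H) :
    (Matrix.PosSemidef !![⟪a, a⟫_ℂ, ⟪a, b⟫_ℂ; ⟪b, a⟫_ℂ, ⟪b, b⟫_ℂ])
    ∧ ‖⟪a, b⟫_ℂ‖ ^ 2 ≤ (⟪a, a⟫_ℂ).re * (⟪b, b⟫_ℂ).re := by
  constructor
  · rw [Matrix.posSemidef_iff_dotProduct_mulVec]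
    constructor
    · show _ = _
      ext i j
      fin_cases i <;> fin_cases j <;>
        simp [Matrix.conjTranspose_apply, inner_conj_symm]
    · intro v
      have key : dotProduct (star v)
            ((!![⟪a, a⟫_ℂ, ⟪a, b⟫_ℂ; ⟪b, a⟫_ℂ, ⟪b, b⟫_ℂ]).mulVec v)
          = ⟪v 0 • a + v 1 • b, v 0 • a + v 1 • b⟫_ℂ := by
        simp [dotProduct, Matrix.mulVec, Fin.sum_univ_two, inner_add_left,
          inner_add_right, inner_smul_left, inner_smul_right, -inner_self_eq_norm_sq_to_K]
        ring
      rw [key, inner_self_eq_norm_sq_to_K]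
      have h0 : (0:ℝ) ≤ ‖v 0 • a + v 1 • b‖ ^ 2 := sq_nonneg _
      have h1 : (0:ℂ) ≤ ((‖v 0 • a + v 1 • b‖ ^ 2 : ℝ) : ℂ) := Complex.zero_le_real.mpr h0
      simp only [Complex.ofReal_pow] at h1; exact h1
      
  · have h1 := norm_inner_le_norm (𝕜 := ℂ) a b
    have h2 : ‖⟪a, b⟫_ℂ‖ ^ 2 ≤ (‖a‖ * ‖b‖) ^ 2 := by
      exact pow_le_pow_left₀ (norm_nonneg _) h1 2
    calc ‖⟪a, b⟫_ℂ‖ ^ 2 ≤ (‖a‖ * ‖b‖) ^ 2 := h2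
      _ = (⟪a, a⟫_ℂ).re * (⟪b, b⟫_ℂ).re := by
          rw [re_inner_self_eq a, re_inner_self_eq b]; ring

lemma covOp_eq_inner {H : Type*} [NormedAddCommGroup H] [InnerProductSpace ℂ H]
    (x y : H) (S T : H →L[ℂ] H) :
    covOp x y S T =
      ⟪(‖y‖ : ℂ) • S x - (⟪y, S x⟫_ℂ / (‖y‖ : ℂ)) • y,
       (‖y‖ : ℂ) • T x - (⟪y, T x⟫_ℂ / (‖y‖ : ℂ)) • y⟫_ℂ := by
  rcases eq_or_ne y 0 with rfl | hy
  · simp [covOp]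
  · have hy' : (‖y‖ : ℂ) ≠ 0 := by
      simpa using norm_ne_zero_iff.mpr hy
    simp only [covOp, inner_sub_left, inner_sub_right, inner_smul_left, inner_smul_right,
      inner_self_eq_norm_sq_to_K, Complex.conj_ofReal, map_div₀, ← inner_conj_symm y (S x), Complex.conj_conj]
    field_simp
    simp only [RCLike.ofReal_eq_complex_ofReal] at *
    ring

theorem covariance_variance_ineq {H : Type*}
    [NormedAddCommGroup H] [InnerProductSpace ℂ H]
    (x y : H) (S T : H →L[ℂ] H) :
    (Matrix.PosSemidef
      !![covOp x y S S, covOp x y S T;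
         conj (covOp x y S T), covOp x y T T])
    ∧ ‖covOp x y S T‖ ^ 2 ≤ (covOp x y S S).re * (covOp x y T T).re := by
  set a := (‖y‖ : ℂ) • S x - (⟪y, S x⟫_ℂ / (‖y‖ : ℂ)) • y with ha
  set b := (‖y‖ : ℂ) • T x - (⟪y, T x⟫_ℂ / (‖y‖ : ℂ)) • y with hb
  have hSS : covOp x y S S = ⟪a, a⟫_ℂ := covOp_eq_inner x y S S
  have hST : covOp x y S T = ⟪a, b⟫_ℂ := covOp_eq_inner x y S T
  have hTT : covOp x y T T = ⟪b, b⟫_ℂ := covOp_eq_inner x y T T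
  have hconj : conj (covOp x y S T) = ⟪b, a⟫_ℂ := by
    rw [hST, inner_conj_symm]
  rw [hconj, hSS, hST, hTT]
  exact gram2_aux a b
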